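/- arXiv:1702.00005 — 5 statements merged into one kernel-verified Lean document; each statement's English description precedes it below -/
import Mathlib

section
/- Let E be the 3×3 complex matrix with entries E₀₁ = E₁₂ = E₂₀ = 1 and all other entries 0, and for a positive integer n let L_n be the diagonal matrix diag(1, ν, ν⁻¹) with ν = exp(2πi/n). Then for every positive integer n, the subgroup of GL(3,ℂ) generated by E and L_n (this is the group Δ(3n²)) has order 3n². -/
open Matrix

/-- The matrix `E` with entries `E₀₁ = E₁₂ = E₂₀ = 1` and all other entries `0`. -/
noncomputable def Ematrix : Matrix (Fin 3) (Fin 3) ℂ := !![0, 1, 0; 0, 0, 1; 1, 0, 0]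

/-- The matrix `L_n = diag(1, ν, ν⁻¹)` with `ν = exp(2πi/n)`. -/
noncomputable def Lmatrix (n : ℕ) : Matrix (Fin 3) (Fin 3) ℂ :=
  Matrix.diagonal ![1, Complex.exp (2 * (Real.pi : ℂ) * Complex.I / (n : ℂ)),
    (Complex.exp (2 * (Real.pi : ℂ) * Complex.I / (n : ℂ)))⁻¹]

namespace DeltaAux

noncomputable def Dmat (ν : ℂ) (a b : ℤ) : Matrix (Fin 3) (Fin 3) ℂ :=
  !![ν ^ a, 0, 0; 0, ν ^ b, 0; 0, 0, ν ^ (-a - b)]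

lemma Dmat_mul (ν : ℂ) (hν : ν ≠ 0) (a b a' b' : ℤ) :
    Dmat ν a b * Dmat ν a' b' = Dmat ν (a + a') (b + b') := by
  simp only [Dmat, Matrix.mul_fin_three]
  rw [show -(a + a') - (b + b') = (-a - b) + (-a' - b') by ring]
  simp [zpow_add₀ hν]

lemma Dmat_zero (ν : ℂ) : Dmat ν 0 0 = 1 := by
  norm_num [Dmat]
  exact Matrix.one_fin_three.symm

noncomputable def Dgl (ν : ℂ) (hν : ν ≠ 0) (a b : ℤ) : GL (Fin 3) ℂ :=
  ⟨Dmat ν a b, Dmat ν (-a) (-b),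
   by rw [Dmat_mul ν hν]; norm_num [Dmat_zero],
   by rw [Dmat_mul ν hν]; norm_num [Dmat_zero]⟩

lemma Dgl_val (ν : ℂ) (hν : ν ≠ 0) (a b : ℤ) : (Dgl ν hν a b).val = Dmat ν a b := rfl

lemma Dgl_mul (ν : ℂ) (hν : ν ≠ 0) (a b a' b' : ℤ) :
    Dgl ν hν a b * Dgl ν hν a' b' = Dgl ν hν (a + a') (b + b') :=
  Units.ext (Dmat_mul ν hν a b a' b')

lemma Dgl_zero (ν : ℂ) (hν : ν ≠ 0) : Dgl ν hν 0 0 = 1 :=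
  Units.ext (Dmat_zero ν)

lemma Dgl_inv (ν : ℂ) (hν : ν ≠ 0) (a b : ℤ) :
    (Dgl ν hν a b)⁻¹ = Dgl ν hν (-a) (-b) :=
  Units.ext rfl

lemma Dgl_pow (ν : ℂ) (hν : ν ≠ 0) (a b : ℤ) (m : ℕ) :
    (Dgl ν hν a b) ^ m = Dgl ν hν (m * a) (m * b) := by
  induction m with
  | zero => simp [Dgl_zero]
  | succ m ih =>
      rw [pow_succ, ih, Dgl_mul]
      congr 1 <;> push_cast <;> ring

lemma Dgl_zpow (ν : ℂ) (hν : ν ≠ 0) (a b : ℤ) (m : ℤ) :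
    (Dgl ν hν a b) ^ m = Dgl ν hν (m * a) (m * b) := by
  cases m with
  | ofNat m => rw [Int.ofNat_eq_coe, zpow_natCast, Dgl_pow]
  | negSucc m =>
      rw [zpow_negSucc, Dgl_pow, Dgl_inv]
      congr 1 <;> simp [Int.negSucc_eq] <;> ring

lemma zpow_congr (ν : ℂ) (hν : ν ≠ 0) {n : ℕ} (h1 : ν ^ (n : ℤ) = 1) {a a' : ℤ}
    (h : (n : ℤ) ∣ a - a') : ν ^ a = ν ^ a' := by
  obtain ⟨c, hc⟩ := h
  have ha : a = a' + (n : ℤ) * c := by linarith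
  rw [ha, zpow_add₀ hν, _root_.zpow_mul, h1, _root_.one_zpow, mul_one]

lemma Dgl_congr (ν : ℂ) (hν : ν ≠ 0) {n : ℕ} (h1 : ν ^ (n : ℤ) = 1) {a b a' b' : ℤ}
    (ha : (n : ℤ) ∣ a - a') (hb : (n : ℤ) ∣ b - b') :
    Dgl ν hν a b = Dgl ν hν a' b' := by
  refine Units.ext ?_
  have hc : (n : ℤ) ∣ (-a - b) - (-a' - b') := by
    have := dvd_add (dvd_neg.mpr ha) (dvd_neg.mpr hb)
    rw [show (-a - b) - (-a' - b') = -(a - a') + -(b - b') by ring]; exact this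
  show Dmat ν a b = Dmat ν a' b'
  rw [Dmat, Dmat, zpow_congr ν hν h1 ha, zpow_congr ν hν h1 hb, zpow_congr ν hν h1 hc]

lemma Emat_sq : Ematrix ^ 2 = !![0, 0, 1; 1, 0, 0; 0, 1, 0] := by
  rw [pow_two]
  norm_num [Ematrix, Matrix.mul_fin_three]

lemma Emat_cube : Ematrix ^ 3 = 1 := by
  rw [pow_succ, Emat_sq]
  norm_num [Ematrix, Matrix.mul_fin_three]
  exact Matrix.one_fin_three.symm

lemma Emat_mul_Dmat (ν : ℂ) (a b : ℤ) :
    Ematrix * Dmat ν a b = Dmat ν b (-a - b) * Ematrix := by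
  simp only [Ematrix, Dmat, Matrix.mul_fin_three]
  rw [show -b - (-a - b) = a by ring]
  norm_num

lemma E_mul_Dmat_explicit (ν : ℂ) (a b : ℤ) :
    Ematrix * Dmat ν a b = !![0, ν ^ b, 0; 0, 0, ν ^ (-a - b); ν ^ a, 0, 0] := by
  simp only [Ematrix, Dmat, Matrix.mul_fin_three]
  norm_num

lemma E2_mul_Dmat_explicit (ν : ℂ) (a b : ℤ) :
    Ematrix ^ 2 * Dmat ν a b = !![0, 0, ν ^ (-a - b); ν ^ a, 0, 0; 0, ν ^ b, 0] := by
  rw [Emat_sq]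
  simp only [Dmat, Matrix.mul_fin_three]
  norm_num

lemma diag3 (x y z : ℂ) :
    Matrix.diagonal ![x, y, z] = !![x, 0, 0; 0, y, 0; 0, 0, z] := by
  ext i j
  fin_cases i <;> fin_cases j <;> simp [Matrix.diagonal, Matrix.vecHead, Matrix.vecTail]

/-- The key injectivity fact at the matrix level. -/
lemma key_inj (ν : ℂ) (hν : ν ≠ 0) {k k' : ℕ} (hk : k < 3) (hk' : k' < 3) {a b a' b' : ℤ}
    (h : Ematrix ^ k * Dmat ν a b = Ematrix ^ k' * Dmat ν a' b') :
    k = k' ∧ ν ^ a = ν ^ a' ∧ ν ^ b = ν ^ b' := by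
  have e0 : ∀ (c d : ℤ), Ematrix ^ 0 * Dmat ν c d = !![ν ^ c, 0, 0; 0, ν ^ d, 0; 0, 0, ν ^ (-c - d)] := by
    intro c d; rw [pow_zero, one_mul]; rfl
  have e1 : ∀ (c d : ℤ), Ematrix ^ 1 * Dmat ν c d = !![0, ν ^ d, 0; 0, 0, ν ^ (-c - d); ν ^ c, 0, 0] := by
    intro c d; rw [pow_one, E_mul_Dmat_explicit]
  have e2 := E2_mul_Dmat_explicit ν
  interval_cases k <;> interval_cases k' <;>
    [skip; skip; skip; skip; skip; skip; skip; skip; skip] <;>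
    first
    | (rw [e0, e0] at h
       refine ⟨rfl, ?_, ?_⟩
       · have := congrArg (fun M => M 0 0) h; simpa using this
       · have := congrArg (fun M => M 1 1) h; simpa using this)
    | (rw [e1, e1] at h
       refine ⟨rfl, ?_, ?_⟩
       · have := congrArg (fun M => M 2 0) h; simpa using this
       · have := congrArg (fun M => M 0 1) h; simpa using this)
    | (rw [e2, e2] at h
       refine ⟨rfl, ?_, ?_⟩
       · have := congrArg (fun M => M 1 0) h; simpa using this
       · have := congrArg (fun M => M 2 1) h; simpa using this)
    | (exfalso
       first
       | (rw [e0, e1] at h; have := congrArg (fun M => M 0 0) h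
          simp at this; exact zpow_ne_zero a hν this)
       | (rw [e0, e2] at h; have := congrArg (fun M => M 0 0) h
          simp at this; exact zpow_ne_zero a hν this)
       | (rw [e1, e0] at h; have := congrArg (fun M => M 0 0) h
          simp at this; exact zpow_ne_zero a' hν this.symm)
       | (rw [e2, e0] at h; have := congrArg (fun M => M 0 0) h
          simp at this; exact zpow_ne_zero a' hν this.symm)
       | (rw [e1, e2] at h; have := congrArg (fun M => M 2 0) h
          simp at this; exact zpow_ne_zero a hν this)
       | (rw [e2, e1] at h; have := congrArg (fun M => M 2 0) h
          simp at this; exact zpow_ne_zero a' hν this.symm))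

end DeltaAux

open DeltaAux in
/-- The group `Δ(3n²)`, generated by `E` and `L_n` inside `GL(3,ℂ)`, has order `3n²`. -/
theorem delta_3n2_order (n : ℕ) (hn : 0 < n) (E L : GL (Fin 3) ℂ)
    (hE : E.val = Ematrix) (hL : L.val = Lmatrix n) :
    Nat.card ↥(Subgroup.closure ({E, L} : Set (GL (Fin 3) ℂ))) = 3 * n ^ 2 := by
  haveI : NeZero n := ⟨hn.ne'⟩
  set ν : ℂ := Complex.exp (2 * (Real.pi : ℂ) * Complex.I / (n : ℂ)) with hνdef
  have hprim : IsPrimitiveRoot ν n := Complex.isPrimitiveRoot_exp n hn.ne'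
  have hν : ν ≠ 0 := Complex.exp_ne_zero _
  have hν1 : ν ^ (n : ℤ) = 1 := by
    rw [zpow_natCast]; exact hprim.pow_eq_one
  have hE3 : E ^ 3 = 1 := by
    refine Units.ext ?_
    rw [Units.val_pow_eq_pow_val, hE, Emat_cube]; rfl
  have hLD : L = Dgl ν hν 0 1 := by
    refine Units.ext ?_
    rw [hL, Dgl_val]
    show Lmatrix n = Dmat ν 0 1
    rw [Lmatrix, Dmat, diag3]
    norm_num [_root_.zpow_neg]
    exact hνdef.symm
  -- conjugation relations
  have hED : ∀ a b : ℤ, E * Dgl ν hν a b = Dgl ν hν b (-a - b) * E := by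
    intro a b
    refine Units.ext ?_
    show E.val * (Dgl ν hν a b).val = (Dgl ν hν b (-a - b)).val * E.val
    rw [hE, Dgl_val, Dgl_val, Emat_mul_Dmat]
  have hDE : ∀ a b : ℤ, Dgl ν hν a b * E = E * Dgl ν hν (-a - b) a := by
    intro a b
    have := hED (-a - b) a
    rw [show -(-a - b) - a = b by ring] at this
    exact this.symm
  have hEmem : E ∈ Subgroup.closure ({E, L} : Set (GL (Fin 3) ℂ)) :=
    Subgroup.subset_closure (Set.mem_insert _ _)
  have hLmem : L ∈ Subgroup.closure ({E, L} : Set (GL (Fin 3) ℂ)) :=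
    Subgroup.subset_closure (Set.mem_insert_of_mem _ rfl)
  have hDmem : ∀ a b : ℤ, Dgl ν hν a b ∈ Subgroup.closure ({E, L} : Set (GL (Fin 3) ℂ)) := by
    intro a b
    have h1 : Dgl ν hν 0 1 ∈ Subgroup.closure ({E, L} : Set (GL (Fin 3) ℂ)) := hLD ▸ hLmem
    have h2 : Dgl ν hν 1 (-1) ∈ Subgroup.closure ({E, L} : Set (GL (Fin 3) ℂ)) := by
      have he : E * Dgl ν hν 0 1 * E⁻¹ = Dgl ν hν 1 (-1) := by
        rw [hED 0 1]
        rw [show -(0:ℤ) - 1 = -1 by ring]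
        group
      rw [← he]
      exact mul_mem (mul_mem hEmem h1) (inv_mem hEmem)
    have key : (Dgl ν hν 1 (-1)) ^ a * (Dgl ν hν 0 1) ^ (a + b) = Dgl ν hν a b := by
      rw [Dgl_zpow, Dgl_zpow, Dgl_mul,
        show a * 1 + (a + b) * 0 = a by ring, show a * (-1) + (a + b) * 1 = b by ring]
    rw [← key]
    exact mul_mem (zpow_mem h2 a) (zpow_mem h1 (a + b))
  -- moving a diagonal past a power of E
  have hmove : ∀ (m : ℕ) (a b : ℤ), ∃ a' b' : ℤ,
      Dgl ν hν a b * E ^ m = E ^ m * Dgl ν hν a' b' := by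
    intro m
    induction m with
    | zero => intro a b; exact ⟨a, b, by simp⟩
    | succ m ih =>
        intro a b
        obtain ⟨c, d, hcd⟩ := ih a b
        refine ⟨-c - d, c, ?_⟩
        rw [pow_succ, ← mul_assoc, hcd, mul_assoc, hDE, mul_assoc]
  -- the closure as an explicit set
  have hSclosure : (Subgroup.closure ({E, L} : Set (GL (Fin 3) ℂ)) : Set (GL (Fin 3) ℂ)) =
      {x | ∃ (k : ℕ) (a b : ℤ), x = E ^ k * Dgl ν hν a b} := by
    ext x
    simp only [SetLike.mem_coe, Set.mem_setOf_eq]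
    constructor
    · intro hx
      induction hx using Subgroup.closure_induction with
      | mem y hy =>
          rcases hy with hy | hy
          · exact ⟨1, 0, 0, by simp [hy, Dgl_zero]⟩
          · exact ⟨0, 0, 1, by simp only [Set.mem_singleton_iff] at hy; simp [hy, hLD]⟩
      | one => exact ⟨0, 0, 0, by simp [Dgl_zero]⟩
      | mul x y hx hy ihx ihy =>
          obtain ⟨k, a, b, rfl⟩ := ihx
          obtain ⟨k', a', b', rfl⟩ := ihy
          obtain ⟨c, d, hcd⟩ := hmove k' a b
          refine ⟨k + k', c + a', d + b', ?_⟩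
          rw [mul_assoc, ← mul_assoc (Dgl ν hν a b), hcd, pow_add]
          rw [← Dgl_mul]
          group
      | inv x hx ihx =>
          obtain ⟨k, a, b, rfl⟩ := ihx
          obtain ⟨c, d, hcd⟩ := hmove (2 * k) (-a) (-b)
          refine ⟨2 * k, c, d, ?_⟩
          have hkinv : (E ^ k)⁻¹ = E ^ (2 * k) := by
            refine inv_eq_of_mul_eq_one_right ?_
            rw [← pow_add, show k + 2 * k = 3 * k by ring, pow_mul, hE3, one_pow]
          rw [_root_.mul_inv_rev, Dgl_inv, hkinv, hcd]
    · rintro ⟨k, a, b, rfl⟩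
      exact mul_mem (pow_mem hEmem k) (hDmem a b)
  -- the explicit set as a range
  set F : ZMod 3 × ZMod n × ZMod n → GL (Fin 3) ℂ :=
    fun p => E ^ p.1.val * Dgl ν hν (p.2.1.val : ℤ) (p.2.2.val : ℤ) with hF
  have hdvd : ∀ a : ℤ, (n : ℤ) ∣ a - ((a : ZMod n).val : ℤ) := by
    intro a
    rw [← ZMod.intCast_zmod_eq_zero_iff_dvd]
    push_cast
    simp [ZMod.natCast_val, ZMod.intCast_cast, ZMod.intCast_zmod_cast]
  have hrange : {x | ∃ (k : ℕ) (a b : ℤ), x = E ^ k * Dgl ν hν a b} = Set.range F := by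
    ext x
    constructor
    · rintro ⟨k, a, b, rfl⟩
      refine ⟨⟨(k : ZMod 3), (a : ZMod n), (b : ZMod n)⟩, ?_⟩
      simp only [hF]
      have h1 : E ^ ((k : ZMod 3)).val = E ^ k := by
        rw [ZMod.val_natCast, ← pow_eq_pow_mod k hE3]
      have h2 : Dgl ν hν (((a : ZMod n)).val : ℤ) (((b : ZMod n)).val : ℤ) = Dgl ν hν a b :=
        Dgl_congr ν hν hν1 (dvd_sub_comm.mp (hdvd a)) (dvd_sub_comm.mp (hdvd b))
      rw [h1, h2]
    · rintro ⟨⟨k, a, b⟩, rfl⟩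
      exact ⟨k.val, (a.val : ℤ), (b.val : ℤ), rfl⟩
  have hFinj : Function.Injective F := by
    rintro ⟨k, a, b⟩ ⟨k', a', b'⟩ h
    simp only [hF] at h
    have hmat : Ematrix ^ k.val * Dmat ν (a.val : ℤ) (b.val : ℤ) =
        Ematrix ^ k'.val * Dmat ν (a'.val : ℤ) (b'.val : ℤ) := by
      have := congrArg Units.val h
      simpa [Units.val_mul, Units.val_pow_eq_pow_val, hE, Dgl_val] using this
    obtain ⟨hk, ha, hb⟩ := key_inj ν hν (k.val_lt) (k'.val_lt) hmat
    have hkk : k = k' := ZMod.val_injective 3 hk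
    rw [zpow_natCast, zpow_natCast] at ha hb
    have haa : a = a' := ZMod.val_injective n (hprim.pow_inj a.val_lt a'.val_lt ha)
    have hbb : b = b' := ZMod.val_injective n (hprim.pow_inj b.val_lt b'.val_lt hb)
    simp [hkk, haa, hbb]
  -- conclude
  have hcard : Nat.card ↥(Subgroup.closure ({E, L} : Set (GL (Fin 3) ℂ))) =
      Nat.card ↥(Set.range F) := by
    exact Nat.card_congr (Equiv.setCongr (hSclosure.trans hrange))
  rw [hcard, Nat.card_range_of_injective hFinj]
  simp [Nat.card_prod, Nat.card_zmod]
  ring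
end

section
/- Let E be the 3×3 complex matrix with entries E₀₁ = E₁₂ = E₂₀ = 1 and all other entries 0, let I be the 3×3 complex matrix with entries I₀₂ = I₁₁ = I₂₀ = −1 and all other entries 0, and for a positive integer n let L_n = diag(1, ν, ν⁻¹) with ν = exp(2πi/n). Then for every positive integer n, the subgroup of GL(3,ℂ) generated by E, I and L_n (this is the group Δ(6n²)) has order 6n². -/
open Matrix

/-- The matrix `I` with entries `I₀₂ = I₁₁ = I₂₀ = −1` and all other entries `0`. -/
noncomputable def Imatrix : Matrix (Fin 3) (Fin 3) ℂ := !![0, 0, -1; 0, -1, 0; -1, 0, 0]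

namespace Delta6n2

noncomputable def nu (n : ℕ) : ℂ := Complex.exp (2 * (Real.pi : ℂ) * Complex.I / (n : ℂ))

noncomputable def chi (n : ℕ) (a : ZMod n) : ℂ := nu n ^ a.val

theorem hprim {n : ℕ} (hn : 0 < n) : IsPrimitiveRoot (nu n) n :=
  Complex.isPrimitiveRoot_exp n hn.ne'

theorem nu_pow_mod {n : ℕ} (hn : 0 < n) (k : ℕ) : nu n ^ (k % n) = nu n ^ k := by
  conv_rhs => rw [← Nat.mod_add_div k n]
  rw [pow_add, pow_mul, (hprim hn).pow_eq_one, one_pow, mul_one]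

theorem chi_zero {n : ℕ} (hn : 0 < n) : chi n 0 = 1 := by
  haveI : NeZero n := ⟨hn.ne'⟩
  simp [chi]

theorem chi_add {n : ℕ} (hn : 0 < n) (a b : ZMod n) :
    chi n (a + b) = chi n a * chi n b := by
  haveI : NeZero n := ⟨hn.ne'⟩
  rw [chi, chi, chi, ZMod.val_add, nu_pow_mod hn, pow_add]

theorem chi_ne_zero {n : ℕ} (a : ZMod n) : chi n a ≠ 0 :=
  pow_ne_zero _ (Complex.exp_ne_zero _)

theorem chi_inj {n : ℕ} (hn : 0 < n) : Function.Injective (chi n) := by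
  haveI : NeZero n := ⟨hn.ne'⟩
  intro a b h
  exact ZMod.val_injective n ((hprim hn).pow_inj (ZMod.val_lt a) (ZMod.val_lt b) h)

theorem chi_one {n : ℕ} (hn : 0 < n) : chi n 1 = nu n := by
  haveI : NeZero n := ⟨hn.ne'⟩
  rw [chi, ZMod.val_one_eq_one_mod, nu_pow_mod hn, pow_one]

theorem chi_neg_one {n : ℕ} (hn : 0 < n) : chi n (-1) = (nu n)⁻¹ := by
  have h : chi n (-1) * chi n 1 = 1 := by
    rw [← chi_add hn]; norm_num [chi_zero hn]
  rw [← chi_one hn]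
  exact eq_inv_of_mul_eq_one_left h

theorem sign_ne_zero (σ : Equiv.Perm (Fin 3)) :
    ((Equiv.Perm.sign σ : ℤ) : ℂ) ≠ 0 := by
  rcases Int.units_eq_one_or (Equiv.Perm.sign σ) with h | h <;> simp [h]

noncomputable def Mmat (n : ℕ) (v : Fin 3 → ZMod n) (σ : Equiv.Perm (Fin 3)) :
    Matrix (Fin 3) (Fin 3) ℂ :=
  Matrix.of fun i j => if σ j = i then ((Equiv.Perm.sign σ : ℤ) : ℂ) * chi n (v i) else 0

theorem Mmul {n : ℕ} (hn : 0 < n) (v w : Fin 3 → ZMod n) (σ τ : Equiv.Perm (Fin 3)) :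
    Mmat n v σ * Mmat n w τ = Mmat n (v + w ∘ ⇑σ⁻¹) (σ * τ) := by
  ext i j
  rw [Matrix.mul_apply, Finset.sum_eq_single (τ j)]
  · by_cases h : σ (τ j) = i
    · have h1 : (σ * τ) j = i := h
      have h2 : σ⁻¹ i = τ j := by rw [← h]; simp
      simp only [Mmat, Matrix.of_apply, if_pos h, if_pos h1, if_pos rfl, Pi.add_apply,
        Function.comp_apply, h2, if_true]
      rw [chi_add hn, Equiv.Perm.sign_mul, Units.val_mul, Int.cast_mul]
      ring
    · have h1 : ¬ (σ * τ) j = i := h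
      simp [Mmat, h, h1]
  · intro k _ hk
    have : ¬ τ j = k := fun h => hk h.symm
    simp [Mmat, this]
  · simp

theorem Mone {n : ℕ} (hn : 0 < n) : Mmat n 0 (1 : Equiv.Perm (Fin 3)) = 1 := by
  ext i j
  simp [Mmat, Matrix.one_apply, chi_zero hn, eq_comm]

noncomputable def Umat {n : ℕ} (hn : 0 < n) (v : Fin 3 → ZMod n) (σ : Equiv.Perm (Fin 3)) :
    GL (Fin 3) ℂ where
  val := Mmat n v σ
  inv := Mmat n (-(v ∘ ⇑σ)) σ⁻¹
  val_inv := by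
    rw [Mmul hn]
    have h1 : v + (-(v ∘ ⇑σ)) ∘ ⇑σ⁻¹ = 0 := by
      funext i; simp [Function.comp, Equiv.apply_symm_apply]
    rw [h1, mul_inv_cancel]
    exact Mone hn
  inv_val := by
    rw [Mmul hn]
    have h1 : -(v ∘ ⇑σ) + v ∘ ⇑(σ⁻¹)⁻¹ = 0 := by
      funext i; simp [Function.comp]
    rw [h1, inv_mul_cancel]
    exact Mone hn

theorem Umat_val {n : ℕ} (hn : 0 < n) (v : Fin 3 → ZMod n) (σ : Equiv.Perm (Fin 3)) :
    (Umat hn v σ).val = Mmat n v σ := rfl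

theorem Umul {n : ℕ} (hn : 0 < n) (v w : Fin 3 → ZMod n) (σ τ : Equiv.Perm (Fin 3)) :
    Umat hn v σ * Umat hn w τ = Umat hn (v + w ∘ ⇑σ⁻¹) (σ * τ) :=
  Units.ext (Mmul hn v w σ τ)

theorem Uone {n : ℕ} (hn : 0 < n) : Umat hn 0 (1 : Equiv.Perm (Fin 3)) = 1 :=
  Units.ext (Mone hn)

theorem Uinv {n : ℕ} (hn : 0 < n) (v : Fin 3 → ZMod n) (σ : Equiv.Perm (Fin 3)) :
    (Umat hn v σ)⁻¹ = Umat hn (-(v ∘ ⇑σ)) σ⁻¹ :=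
  Units.ext rfl

theorem Upow {n : ℕ} (hn : 0 < n) (v : Fin 3 → ZMod n) (k : ℕ) :
    Umat hn v 1 ^ k = Umat hn (k • v) 1 := by
  induction k with
  | zero => rw [pow_zero, zero_smul, Uone hn]
  | succ k ih =>
    rw [pow_succ, ih, Umul hn]
    have h1 : k • v + v ∘ ⇑((1 : Equiv.Perm (Fin 3))⁻¹) = (k + 1) • v := by
      funext i
      simp only [Pi.add_apply, Pi.smul_apply, Function.comp_apply, inv_one,
        Equiv.Perm.coe_one, id_eq, succ_nsmul]
    rw [h1, one_mul]

theorem sum_perm {n : ℕ} (w : Fin 3 → ZMod n) (σ : Equiv.Perm (Fin 3)) :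
    w (σ 0) + w (σ 1) + w (σ 2) = w 0 + w 1 + w 2 := by
  have := Equiv.sum_comp σ w
  simpa [Fin.sum_univ_three] using this

noncomputable def Sgrp (n : ℕ) (hn : 0 < n) : Subgroup (GL (Fin 3) ℂ) where
  carrier := {g | ∃ v σ, v 0 + v 1 + v 2 = 0 ∧ g = Umat hn v σ}
  one_mem' := ⟨0, 1, by simp, (Uone hn).symm⟩
  mul_mem' := by
    rintro a b ⟨v, σ, hv, rfl⟩ ⟨w, τ, hw, rfl⟩
    refine ⟨v + w ∘ ⇑σ⁻¹, σ * τ, ?_, Umul hn v w σ τ⟩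
    have hw' : w (σ⁻¹ 0) + w (σ⁻¹ 1) + w (σ⁻¹ 2) = 0 := (sum_perm w σ⁻¹).trans hw
    simp only [Pi.add_apply, Function.comp_apply]
    linear_combination hv + hw'
  inv_mem' := by
    rintro a ⟨v, σ, hv, rfl⟩
    refine ⟨-(v ∘ ⇑σ), σ⁻¹, ?_, Uinv hn v σ⟩
    have hv' : v (σ 0) + v (σ 1) + v (σ 2) = 0 := (sum_perm v σ).trans hv
    simp only [Pi.neg_apply, Function.comp_apply]
    linear_combination -hv'

def cperm : Equiv.Perm (Fin 3) := (finRotate 3)⁻¹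

def sperm : Equiv.Perm (Fin 3) := Equiv.swap 0 2

theorem hEeq {n : ℕ} (hn : 0 < n) : Ematrix = Mmat n 0 cperm := by
  have hs : Equiv.Perm.sign cperm = 1 := by decide
  ext i j
  fin_cases i <;> fin_cases j <;>
    simp [Mmat, Ematrix, chi_zero hn, hs, Matrix.vecHead, Matrix.vecTail,
      show cperm 0 = 2 from by decide,
      show cperm 1 = 0 from by decide, show cperm 2 = 1 from by decide]

theorem hIeq {n : ℕ} (hn : 0 < n) : Imatrix = Mmat n 0 sperm := by
  have hs : Equiv.Perm.sign sperm = -1 := by decide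
  ext i j
  fin_cases i <;> fin_cases j <;>
    simp [Mmat, Imatrix, chi_zero hn, hs, Matrix.vecHead, Matrix.vecTail,
      show sperm 0 = 2 from by decide,
      show sperm 1 = 1 from by decide, show sperm 2 = 0 from by decide]

theorem hLeq {n : ℕ} (hn : 0 < n) :
    Lmatrix n = Mmat n (![0, 1, -1] : Fin 3 → ZMod n) 1 := by
  ext i j
  fin_cases i <;> fin_cases j <;>
    simp [Mmat, Lmatrix, Matrix.diagonal, chi_zero hn, chi_one hn, chi_neg_one hn, nu]

end Delta6n2

open Delta6n2 in
/-- The group `Δ(6n²)`, generated by `E`, `I` and `L_n` inside `GL(3,ℂ)`, has order `6n²`. -/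
theorem delta_6n2_order (n : ℕ) (hn : 0 < n) (E I L : GL (Fin 3) ℂ)
    (hE : E.val = Ematrix) (hI : I.val = Imatrix) (hL : L.val = Lmatrix n) :
    Nat.card ↥(Subgroup.closure ({E, I, L} : Set (GL (Fin 3) ℂ))) = 6 * n ^ 2 := by
  haveI : NeZero n := ⟨hn.ne'⟩
  set vL : Fin 3 → ZMod n := ![0, 1, -1] with hvL
  have hEu : E = Umat hn 0 cperm := Units.ext (hE.trans (hEeq hn))
  have hIu : I = Umat hn 0 sperm := Units.ext (hI.trans (hIeq hn))
  have hLu : L = Umat hn vL 1 := Units.ext (hL.trans (hLeq hn))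
  have hsumvL : vL 0 + vL 1 + vL 2 = 0 := by simp [hvL]
  have hset : Subgroup.closure ({E, I, L} : Set (GL (Fin 3) ℂ)) = Sgrp n hn := by
    apply le_antisymm
    · rw [Subgroup.closure_le]
      rintro g (rfl | rfl | rfl)
      · exact ⟨0, cperm, by simp, hEu⟩
      · exact ⟨0, sperm, by simp, hIu⟩
      · exact ⟨vL, 1, hsumvL, hLu⟩
    · intro g hg
      obtain ⟨v, σ, hsum, rfl⟩ := hg
      have hEmem : Umat hn 0 cperm ∈ Subgroup.closure ({E, I, L} : Set (GL (Fin 3) ℂ)) :=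
        hEu ▸ Subgroup.subset_closure (by simp)
      have hImem : Umat hn 0 sperm ∈ Subgroup.closure ({E, I, L} : Set (GL (Fin 3) ℂ)) :=
        hIu ▸ Subgroup.subset_closure (by simp)
      have hLmem : Umat hn vL 1 ∈ Subgroup.closure ({E, I, L} : Set (GL (Fin 3) ℂ)) :=
        hLu ▸ Subgroup.subset_closure (by simp)
      have Uzm : ∀ σ τ : Equiv.Perm (Fin 3),
          Umat hn 0 σ * Umat hn 0 τ = Umat hn (0 : Fin 3 → ZMod n) (σ * τ) := by
        intro σ τ
        rw [Umul hn]
        congr 1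
        funext i; simp
      have Hperm : ∀ τ : Equiv.Perm (Fin 3),
          Umat hn 0 τ ∈ Subgroup.closure ({E, I, L} : Set (GL (Fin 3) ℂ)) := by
        have hcases : ∀ τ : Equiv.Perm (Fin 3), τ = 1 ∨ τ = cperm ∨ τ = cperm * cperm ∨
            τ = sperm ∨ τ = cperm * sperm ∨ τ = sperm * cperm := by decide
        intro τ
        rcases hcases τ with rfl | rfl | rfl | rfl | rfl | rfl
        · exact (Uone hn) ▸ one_mem _
        · exact hEmem
        · exact (Uzm _ _) ▸ mul_mem hEmem hEmem
        · exact hImem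
        · exact (Uzm _ _) ▸ mul_mem hEmem hImem
        · exact (Uzm _ _) ▸ mul_mem hImem hEmem
      -- the diagonal generators
      set u1 : Fin 3 → ZMod n := ![1, -1, 0] with hu1def
      have hu1 : Umat hn u1 1 ∈ Subgroup.closure ({E, I, L} : Set (GL (Fin 3) ℂ)) := by
        have key : Umat hn u1 1 = Umat hn 0 cperm * Umat hn vL 1 * (Umat hn 0 cperm)⁻¹ := by
          rw [Uinv hn, Umul hn, Umul hn]
          congr 1
          · funext i
            fin_cases i <;>
              simp [hu1def, hvL, Function.comp, show cperm.symm 0 = 1 from by decide,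
                show cperm.symm 1 = 2 from by decide, show cperm.symm 2 = 0 from by decide]
          · group
        rw [key]
        exact mul_mem (mul_mem hEmem hLmem) (inv_mem hEmem)
      have hdecomp : v = (v 0).val • u1 + (v 0 + v 1).val • vL := by
        funext i
        have A : (((v 0).val : ℕ) : ZMod n) = v 0 := ZMod.natCast_rightInverse _
        have B : (((v 0 + v 1).val : ℕ) : ZMod n) = v 0 + v 1 := ZMod.natCast_rightInverse _
        fin_cases i
        · show v 0 = (v 0).val • (1 : ZMod n) + (v 0 + v 1).val • (0 : ZMod n)
          simp only [nsmul_eq_mul, A, B]; ring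
        · show v 1 = (v 0).val • (-1 : ZMod n) + (v 0 + v 1).val • (1 : ZMod n)
          simp only [nsmul_eq_mul, A, B]; ring
        · show v 2 = (v 0).val • (0 : ZMod n) + (v 0 + v 1).val • (-1 : ZMod n)
          simp only [nsmul_eq_mul, A, B]; linear_combination hsum
      have hdiag : Umat hn v 1 ∈ Subgroup.closure ({E, I, L} : Set (GL (Fin 3) ℂ)) := by
        have : Umat hn v 1 = Umat hn u1 1 ^ (v 0).val * Umat hn vL 1 ^ (v 0 + v 1).val := by
          rw [Upow hn, Upow hn, Umul hn]
          congr 1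
        rw [this]
        exact mul_mem (pow_mem hu1 _) (pow_mem hLmem _)
      have : Umat hn v σ = Umat hn v 1 * Umat hn 0 σ := by
        rw [Umul hn]
        congr 1
        funext i; simp
      rw [this]
      exact mul_mem hdiag (Hperm σ)
  rw [hset]
  -- count
  have hker := chi_inj hn
  set f : ZMod n × ZMod n × Equiv.Perm (Fin 3) → (Sgrp n hn) := fun p =>
    ⟨Umat hn ![p.1, p.2.1, -p.1 - p.2.1] p.2.2,
      ⟨![p.1, p.2.1, -p.1 - p.2.1], p.2.2, by simp, rfl⟩⟩ with hf
  have hbij : Function.Bijective f := by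
    constructor
    · intro p q h
      have hM : Mmat n ![p.1, p.2.1, -p.1 - p.2.1] p.2.2
          = Mmat n ![q.1, q.2.1, -q.1 - q.2.1] q.2.2 := by
        have := congrArg (fun x : (Sgrp n hn) => (x : GL (Fin 3) ℂ).val) h
        simpa [hf, Umat_val] using this
      have hσ : p.2.2 = q.2.2 := by
        apply Equiv.ext
        intro j
        by_contra hne
        have h1 := congrFun (congrFun hM (p.2.2 j)) j
        have h2 : ¬ q.2.2 j = p.2.2 j := fun h => hne h.symm
        simp [Mmat, h2] at h1
        exact chi_ne_zero _ h1
      have hv : ∀ i : Fin 3, (![p.1, p.2.1, -p.1 - p.2.1] : Fin 3 → ZMod n) i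
          = ![q.1, q.2.1, -q.1 - q.2.1] i := by
        intro i
        have h1 := congrFun (congrFun hM i) ((q.2.2)⁻¹ i)
        rw [hσ] at h1
        simp only [Mmat, Matrix.of_apply, Equiv.Perm.inv_def, Equiv.apply_symm_apply, eq_self_iff_true,
          if_true] at h1
        exact hker (mul_left_cancel₀ (sign_ne_zero _) h1)
      have h0 := hv 0
      have h1 := hv 1
      simp at h0 h1
      exact Prod.ext h0 (Prod.ext h1 hσ)
    · rintro ⟨g, v, σ, hsum, rfl⟩
      refine ⟨(v 0, v 1, σ), ?_⟩
      apply Subtype.ext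
      show Umat hn ![v 0, v 1, -v 0 - v 1] σ = Umat hn v σ
      congr 1
      funext i
      fin_cases i <;> simp
      linear_combination -hsum
  rw [← Nat.card_eq_of_bijective f hbij, Nat.card_prod, Nat.card_prod, Nat.card_zmod,
    Nat.card_eq_fintype_card, Fintype.card_perm, Fintype.card_fin,
    show Nat.factorial 3 = 6 from rfl]
  ring
end

section
/- The subgroup of GL(3,ℂ) generated by the matrices E and L₂ = diag(1, −1, −1) (the group Δ(3·2²)) is isomorphic, as a group, to the alternating group A₄ of even permutations of four objects (Mathlib: alternatingGroup (Fin 4)). -/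
open Matrix

/-- The matrix `L₂ = diag(1, −1, −1)`. -/
noncomputable def L2matrix : Matrix (Fin 3) (Fin 3) ℂ := Matrix.diagonal ![1, -1, -1]

def vv : Fin 4 → Fin 3 → ℤ := ![![1,1,1], ![1,-1,-1], ![-1,1,-1], ![-1,-1,1]]

/-- The 3-dimensional representation of `S₄` as symmetries of the tetrahedron. -/
def fmat (σ : Equiv.Perm (Fin 4)) : Matrix (Fin 3) (Fin 3) ℤ :=
  Matrix.of fun i j => (vv (σ j.succ) i - (vv (σ 1) i + vv (σ 2) i + vv (σ 3) i)) / 2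

def cperm : Equiv.Perm (Fin 4) := Equiv.swap 1 3 * Equiv.swap 2 3
def dperm : Equiv.Perm (Fin 4) := Equiv.swap 0 1 * Equiv.swap 2 3

set_option maxHeartbeats 2000000 in
lemma fmat_mul : ∀ x y : Equiv.Perm (Fin 4), fmat (x*y) = fmat x * fmat y := by decide

lemma fmat_one : fmat 1 = 1 := by decide

lemma fmat_ker : ∀ x : Equiv.Perm (Fin 4), fmat x = 1 → x = 1 := by decide

set_option maxHeartbeats 2000000 in
lemma decomp : ∀ x : Equiv.Perm (Fin 4), Equiv.Perm.sign x = 1 →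
    ∃ a b : Fin 3, ∃ e : Fin 2,
      x = cperm^(a:ℕ) * (cperm^(b:ℕ) * dperm^(e:ℕ) * (cperm^(b:ℕ))⁻¹) := by decide

/-- The representation as a homomorphism into `GL(3,ℤ)`. -/
def rho : Equiv.Perm (Fin 4) →* GL (Fin 3) ℤ where
  toFun σ := ⟨fmat σ, fmat σ⁻¹,
    by rw [← fmat_mul]; simp [fmat_one], by rw [← fmat_mul]; simp [fmat_one]⟩
  map_one' := Units.ext fmat_one
  map_mul' x y := Units.ext (fmat_mul x y)

/-- The representation into `GL(3,ℂ)`. -/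
noncomputable def Psi : Equiv.Perm (Fin 4) →* GL (Fin 3) ℂ :=
  (Matrix.GeneralLinearGroup.map (Int.castRingHom ℂ)).comp rho

lemma Psi_val (σ : Equiv.Perm (Fin 4)) :
    (Psi σ).val = (fmat σ).map (Int.cast : ℤ → ℂ) := rfl

lemma fmat_c : fmat cperm = !![0,1,0;0,0,1;1,0,0] := by decide
lemma fmat_d : fmat dperm = !![1,0,0;0,-1,0;0,0,-1] := by decide

lemma Psi_inj : Function.Injective Psi := by
  rw [injective_iff_map_eq_one]
  intro a ha
  have h : (fmat a).map (Int.cast : ℤ → ℂ) = (1 : Matrix (Fin 3) (Fin 3) ℤ).map Int.cast := by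
    rw [← Psi_val, ha]
    ext i j
    simp [Matrix.map_apply, Matrix.one_apply]
  have := Matrix.map_injective (Int.cast_injective (α := ℂ)) h
  exact fmat_ker a this

/-- The group `Δ(3·2²)`, generated by `E` and `L₂` inside `GL(3,ℂ)`,
is isomorphic to the alternating group `A₄`. -/
theorem delta_12_iso_A4 (E L : GL (Fin 3) ℂ)
    (hE : E.val = Ematrix) (hL : L.val = L2matrix) :
    Nonempty (↥(Subgroup.closure ({E, L} : Set (GL (Fin 3) ℂ))) ≃*
      ↥(alternatingGroup (Fin 4))) := by
  have hc : cperm ∈ alternatingGroup (Fin 4) := by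
    rw [Equiv.Perm.mem_alternatingGroup]; decide
  have hd : dperm ∈ alternatingGroup (Fin 4) := by
    rw [Equiv.Perm.mem_alternatingGroup]; decide
  have hPc : Psi cperm = E := by
    apply Units.ext
    rw [Psi_val, fmat_c, hE]
    ext i j
    fin_cases i <;> fin_cases j <;> norm_num [Ematrix, Matrix.map_apply, Matrix.vecHead, Matrix.vecTail]
  have hPd : Psi dperm = L := by
    apply Units.ext
    rw [Psi_val, fmat_d, hL]
    ext i j
    fin_cases i <;> fin_cases j <;> norm_num [L2matrix, Matrix.map_apply, Matrix.vecHead, Matrix.vecTail, Matrix.diagonal, Fin.ext_iff]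
  set ψ : ↥(alternatingGroup (Fin 4)) →* GL (Fin 3) ℂ :=
    Psi.comp (alternatingGroup (Fin 4)).subtype with hψ
  have hinj : Function.Injective ψ := Psi_inj.comp Subtype.val_injective
  have hEm : E ∈ Subgroup.closure ({E, L} : Set (GL (Fin 3) ℂ)) :=
    Subgroup.subset_closure (Set.mem_insert _ _)
  have hLm : L ∈ Subgroup.closure ({E, L} : Set (GL (Fin 3) ℂ)) :=
    Subgroup.subset_closure (Set.mem_insert_of_mem _ rfl)
  have hrange : ψ.range = Subgroup.closure ({E, L} : Set (GL (Fin 3) ℂ)) := by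
    apply le_antisymm
    · rintro x ⟨y, rfl⟩
      obtain ⟨a, b, e, hy⟩ := decomp y.1 (Equiv.Perm.mem_alternatingGroup.mp y.2)
      have : ψ y = Psi y.1 := rfl
      rw [this, hy]
      simp only [_root_.map_mul, map_pow, map_inv, hPc, hPd]
      exact Subgroup.mul_mem _ (Subgroup.pow_mem _ hEm _)
        (Subgroup.mul_mem _ (Subgroup.mul_mem _ (Subgroup.pow_mem _ hEm _)
          (Subgroup.pow_mem _ hLm _)) (Subgroup.inv_mem _ (Subgroup.pow_mem _ hEm _)))
    · rw [Subgroup.closure_le]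
      rintro x (rfl | rfl)
      · exact ⟨⟨cperm, hc⟩, hPc⟩
      · exact ⟨⟨dperm, hd⟩, hPd⟩
  exact ⟨(MulEquiv.subgroupCongr hrange.symm).trans (MonoidHom.ofInjective hinj).symm⟩
end

section
/- The subgroup of GL(3,ℂ) generated by the matrices E, I and L₂ = diag(1, −1, −1) (the group Δ(6·2²)) is isomorphic, as a group, to the symmetric group S₄ of all permutations of four objects (Mathlib: Equiv.Perm (Fin 4)). -/
open Matrix

namespace D24

def Vrows : Fin 4 → Fin 3 → ℤ := ![![1,1,1],![1,-1,-1],![-1,1,-1],![-1,-1,1]]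

def sgn (σ : Equiv.Perm (Fin 4)) : ℤ :=
  (-1) ^ ((Finset.univ.filter (fun p : Fin 4 × Fin 4 => p.1 < p.2 ∧ σ p.2 < σ p.1)).card)

def f (σ : Equiv.Perm (Fin 4)) : Matrix (Fin 3) (Fin 3) ℤ :=
  Matrix.of fun j k => sgn σ * ((∑ i, Vrows (σ i) j * Vrows i k) / 4)

theorem f_one : f 1 = 1 := by decide

set_option maxHeartbeats 4000000 in
theorem f_mul : ∀ σ τ : Equiv.Perm (Fin 4), f (σ * τ) = f σ * f τ := by decide

theorem f_eq_one : ∀ σ : Equiv.Perm (Fin 4), f σ = 1 → σ = 1 := by decide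

/-- `f` as a monoid hom into the matrix monoid. -/
def fM : Equiv.Perm (Fin 4) →* Matrix (Fin 3) (Fin 3) ℤ :=
  { toFun := f, map_one' := f_one, map_mul' := f_mul }

/-- The representation of `S₄` in `GL(3,ℂ)`. -/
noncomputable def F : Equiv.Perm (Fin 4) →* GL (Fin 3) ℂ :=
  (Units.map ((Int.castRingHom ℂ).mapMatrix.toMonoidHom)).comp fM.toHomUnits

theorem F_val (σ : Equiv.Perm (Fin 4)) :
    (F σ).val = (f σ).map (Int.cast : ℤ → ℂ) := rfl

def pa : Equiv.Perm (Fin 4) := ⟨![0,3,1,2], ![0,2,3,1], by decide, by decide⟩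
def pb : Equiv.Perm (Fin 4) := ⟨![0,3,2,1], ![0,3,2,1], by decide, by decide⟩
def pc : Equiv.Perm (Fin 4) := ⟨![1,0,3,2], ![1,0,3,2], by decide, by decide⟩

theorem f_pa : f pa = !![0,1,0; 0,0,1; 1,0,0] := by decide
theorem f_pb : f pb = !![0,0,-1; 0,-1,0; -1,0,0] := by decide
theorem f_pc : f pc = !![1,0,0; 0,-1,0; 0,0,-1] := by decide

theorem closure_abc : Subgroup.closure ({pa, pb, pc} : Set (Equiv.Perm (Fin 4))) = ⊤ := by
  have hform : pb * pc = [(0:Fin 4),3,2,1].formPerm := by decide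
  have hσ : Equiv.Perm.IsCycle (pb * pc) :=
    hform ▸ List.isCycle_formPerm (by decide) (by decide)
  have hs : (pb * pc).support = Finset.univ := by decide
  rw [eq_top_iff, ← Equiv.Perm.closure_cycle_adjacent_swap hσ hs 1, Subgroup.closure_le]
  have ha : pa ∈ Subgroup.closure ({pa, pb, pc} : Set (Equiv.Perm (Fin 4))) :=
    Subgroup.subset_closure (by simp)
  have hb : pb ∈ Subgroup.closure ({pa, pb, pc} : Set (Equiv.Perm (Fin 4))) :=
    Subgroup.subset_closure (by simp)
  have hc : pc ∈ Subgroup.closure ({pa, pb, pc} : Set (Equiv.Perm (Fin 4))) :=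
    Subgroup.subset_closure (by simp)
  rintro x (rfl | rfl)
  · exact mul_mem hb hc
  · have h1 : Equiv.swap (1 : Fin 4) ((pb * pc) 1) = pb * pa * pc := by decide
    rw [h1]
    exact mul_mem (mul_mem hb ha) hc

theorem F_injective : Function.Injective F := by
  rw [injective_iff_map_eq_one]
  intro σ h
  have h' : (f σ).map (Int.cast : ℤ → ℂ) = (1 : Matrix (Fin 3) (Fin 3) ℤ).map Int.cast := by
    rw [Matrix.map_one _ Int.cast_zero Int.cast_one]
    exact congrArg Units.val h
  exact f_eq_one σ (Matrix.map_injective Int.cast_injective h')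

end D24

/-- The group `Δ(6·2²)`, generated by `E`, `I` and `L₂` inside `GL(3,ℂ)`,
is isomorphic to the symmetric group `S₄`. -/
theorem delta_24_iso_S4 (E I L : GL (Fin 3) ℂ)
    (hE : E.val = Ematrix) (hI : I.val = Imatrix) (hL : L.val = L2matrix) :
    Nonempty (↥(Subgroup.closure ({E, I, L} : Set (GL (Fin 3) ℂ))) ≃*
      Equiv.Perm (Fin 4)) := by
  have hFa : D24.F D24.pa = E := by
    ext1
    rw [D24.F_val, D24.f_pa, hE, Ematrix]
    ext i j
    fin_cases i <;> fin_cases j <;> simp [Matrix.map_apply, Matrix.vecHead, Matrix.vecTail]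
  have hFb : D24.F D24.pb = I := by
    ext1
    rw [D24.F_val, D24.f_pb, hI, Imatrix]
    ext i j
    fin_cases i <;> fin_cases j <;> simp [Matrix.map_apply, Matrix.vecHead, Matrix.vecTail]
  have hFc : D24.F D24.pc = L := by
    ext1
    rw [D24.F_val, D24.f_pc, hL, L2matrix]
    ext i j
    fin_cases i <;> fin_cases j <;> simp [Matrix.map_apply, Matrix.diagonal, Matrix.vecHead, Matrix.vecTail]
  have hrange : D24.F.range = Subgroup.closure ({E, I, L} : Set (GL (Fin 3) ℂ)) := by
    rw [MonoidHom.range_eq_map, ← D24.closure_abc, MonoidHom.map_closure,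
      Set.image_insert_eq, Set.image_insert_eq, Set.image_singleton, hFa, hFb, hFc]
  exact ⟨(MulEquiv.subgroupCongr hrange.symm).trans (MonoidHom.ofInjective D24.F_injective).symm⟩
end

section
/- Let n be a positive integer not divisible by 3 and let m be a positive integer. Then the subgroup of GL(3,ℂ) generated by L_n and E_m (this is the group Δ(3n², m)) has order 3^m·n². -/
open Matrix

/-- The matrix `E_m`, with entries `μ = exp(2πi/3^m)` in positions `(0,1)`, `(1,2)`, `(2,0)`
and `0` elsewhere. -/
noncomputable def EMmatrix (m : ℕ) : Matrix (Fin 3) (Fin 3) ℂ :=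
  Complex.exp (2 * (Real.pi : ℂ) * Complex.I / ((3 : ℂ) ^ m)) •
    (!![0, 1, 0; 0, 0, 1; 1, 0, 0] : Matrix (Fin 3) (Fin 3) ℂ)

noncomputable def dNu (n : ℕ) : ℂ := Complex.exp (2 * (Real.pi : ℂ) * Complex.I / (n : ℂ))
noncomputable def dMu (m : ℕ) : ℂ := Complex.exp (2 * (Real.pi : ℂ) * Complex.I / ((3 : ℂ) ^ m))

def dE (a b : ℤ) : ZMod 3 → ℤ := fun j => if j = 0 then a else if j = 1 then b else -a - b

noncomputable def dM (n m : ℕ) (k a b : ℤ) : Matrix (Fin 3) (Fin 3) ℂ :=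
  fun i j => if ((j : ℕ) : ZMod 3) = ((i : ℕ) : ZMod 3) + (k : ZMod 3)
    then dMu m ^ k * dNu n ^ (dE a b ((j : ℕ) : ZMod 3)) else 0

lemma dMu_ne (m : ℕ) : dMu m ≠ 0 := Complex.exp_ne_zero _
lemma dNu_ne (n : ℕ) : dNu n ≠ 0 := Complex.exp_ne_zero _

lemma dMu_def' (m : ℕ) : dMu m = Complex.exp (2 * (Real.pi : ℂ) * Complex.I / ((3 ^ m : ℕ) : ℂ)) := by
  rw [dMu]; norm_num

lemma dMu_prim (m : ℕ) : IsPrimitiveRoot (dMu m) (3 ^ m) := by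
  rw [dMu_def']; exact Complex.isPrimitiveRoot_exp _ (by positivity)

lemma dNu_prim (n : ℕ) (hn : n ≠ 0) : IsPrimitiveRoot (dNu n) n :=
  Complex.isPrimitiveRoot_exp _ hn

lemma dkey (μ ν : ℂ) (hμ : μ ≠ 0) (hν : ν ≠ 0) (k k' e1 e2 e3 : ℤ) (h : e1 + e2 = e3) :
    μ^k * ν^e1 * (μ^k' * ν^e2) = μ^(k+k') * ν^e3 := by
  subst h; rw [zpow_add₀ hμ, zpow_add₀ hν]; ring

set_option maxHeartbeats 2000000 in
lemma dM_mul (n m : ℕ) (k a b k' a' b' : ℤ) :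
    dM n m k a b * dM n m k' a' b' =
    dM n m (k + k') (dE a b (-(k' : ZMod 3)) + a') (dE a b (1 - (k' : ZMod 3)) + b') := by
  have h3 : ∀ x : ZMod 3, x = 0 ∨ x = 1 ∨ x = 2 := by decide
  ext i j
  rcases h3 (k : ZMod 3) with hk|hk|hk <;> rcases h3 (k' : ZMod 3) with hk'|hk'|hk' <;>
    fin_cases i <;> fin_cases j <;>
      simp (config := { decide := true }) only [dM, dE, Matrix.mul_apply, Fin.sum_univ_three,
        Int.cast_add, hk, hk', Fin.isValue, Fin.val_zero, Fin.val_one, Fin.val_two,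
        Nat.cast_zero, Nat.cast_one, Nat.cast_ofNat, zero_mul, mul_zero, add_zero, zero_add,
        if_true, if_false] <;>
      exact dkey _ _ (dMu_ne m) (dNu_ne n) _ _ _ _ _ (by ring)

lemma dM_one (n m : ℕ) : dM n m 0 0 0 = 1 := by
  ext i j
  fin_cases i <;> fin_cases j <;>
    simp (config := { decide := true }) [dM, dE, Matrix.one_apply]

lemma dM_args (n m : ℕ) {k a b k' a' b' : ℤ} (h1 : k = k') (h2 : a = a') (h3 : b = b') :
    dM n m k a b = dM n m k' a' b' := by rw [h1, h2, h3]

lemma dL_eq (n m : ℕ) : Lmatrix n = dM n m 0 0 1 := by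
  ext i j
  fin_cases i <;> fin_cases j <;>
    simp (config := { decide := true }) [dM, dE, Lmatrix, Matrix.diagonal, dNu, _root_.zpow_neg]

lemma dEm_eq (n m : ℕ) : EMmatrix m = dM n m 1 0 0 := by
  ext i j
  fin_cases i <;> fin_cases j <;>
    simp (config := { decide := true }) [dM, dE, EMmatrix, dMu, Matrix.vecHead, Matrix.vecTail]

noncomputable def dS (n m : ℕ) : Subgroup (GL (Fin 3) ℂ) where
  carrier := {x | ∃ k a b : ℤ, (x : Matrix (Fin 3) (Fin 3) ℂ) = dM n m k a b}
  one_mem' := ⟨0, 0, 0, by rw [Units.val_one, dM_one]⟩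
  mul_mem' := by
    rintro x y ⟨k, a, b, hx⟩ ⟨k', a', b', hy⟩
    exact ⟨k + k', _, _, by rw [Units.val_mul, hx, hy, dM_mul]⟩
  inv_mem' := by
    rintro x ⟨k, a, b, hx⟩
    refine ⟨-k, -dE a b ((k : ZMod 3)), -dE a b (1 + (k : ZMod 3)), ?_⟩
    rw [Matrix.coe_units_inv, hx]
    apply Matrix.inv_eq_right_inv
    rw [dM_mul]
    rw [show dM n m (k + -k) (dE a b (-((-k : ℤ) : ZMod 3)) + -dE a b ((k : ZMod 3)))
          (dE a b (1 - ((-k : ℤ) : ZMod 3)) + -dE a b (1 + (k : ZMod 3))) = dM n m 0 0 0 from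
      dM_args n m (by ring) (by push_cast; ring_nf) (by push_cast; ring_nf)]
    exact dM_one n m

lemma dzpow_mul (x : ℂ) (hx : x ≠ 0) (p q : ℤ) : x ^ (p * q) = (x ^ p) ^ q :=
  zpow_mul x p q

lemma dMu_zpow_one (m : ℕ) {d : ℤ} (h : ((3 ^ m : ℕ) : ℤ) ∣ d) : dMu m ^ d = 1 := by
  rw [(dMu_prim m).zpow_eq_one_iff_dvd]; exact_mod_cast h

lemma dNu_zpow_one (n : ℕ) (hn : n ≠ 0) {d : ℤ} (h : (n : ℤ) ∣ d) : dNu n ^ d = 1 := by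
  rw [(dNu_prim n hn).zpow_eq_one_iff_dvd]; exact_mod_cast h

lemma dzpow_eq (x : ℂ) (hx : x ≠ 0) {s t : ℤ} (h : x ^ (s - t) = 1) : x ^ s = x ^ t := by
  have : x ^ s = x ^ (s - t) * x ^ t := by rw [← zpow_add₀ hx]; ring_nf
  rw [this, h, one_mul]

lemma dM_congr (n m : ℕ) (hn : n ≠ 0) (hm : 0 < m) {k a b k' a' b' : ℤ}
    (hk : ((3 ^ m : ℕ) : ℤ) ∣ k - k') (ha : (n : ℤ) ∣ a - a') (hb : (n : ℤ) ∣ b - b') :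
    dM n m k a b = dM n m k' a' b' := by
  have h3 : ((3 : ℕ) : ℤ) ∣ k - k' := by
    refine dvd_trans ?_ hk
    exact_mod_cast pow_dvd_pow 3 hm
  have hkz : (k : ZMod 3) = (k' : ZMod 3) := by
    rw [← sub_eq_zero, ← Int.cast_sub, ZMod.intCast_zmod_eq_zero_iff_dvd]
    exact_mod_cast h3
  have hμ : dMu m ^ k = dMu m ^ k' := dzpow_eq _ (dMu_ne m) (dMu_zpow_one m hk)
  have hν : ∀ j : ZMod 3, dNu n ^ dE a b j = dNu n ^ dE a' b' j := by
    intro j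
    refine dzpow_eq _ (dNu_ne n) (dNu_zpow_one n hn ?_)
    have h3' : ∀ x : ZMod 3, x = 0 ∨ x = 1 ∨ x = 2 := by decide
    rcases h3' j with h|h|h <;> subst h
    · simpa (config := { decide := true }) [dE] using ha
    · simpa (config := { decide := true }) [dE] using hb
    · simp (config := { decide := true }) only [dE, if_true, if_false]
      rw [show -a - b - (-a' - b') = -(a - a') - (b - b') by ring]
      exact dvd_sub (dvd_neg.mpr ha) hb
  ext i j
  simp only [dM, hkz, hμ, hν]

lemma dM_inj (n m : ℕ) (hn : n ≠ 0) (hn3 : ¬ 3 ∣ n) (hm : 0 < m)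
    {k a b k' a' b' : ℕ} (hk : k < 3 ^ m) (hk' : k' < 3 ^ m) (ha : a < n) (ha' : a' < n)
    (hb : b < n) (hb' : b' < n)
    (h : dM n m (k : ℤ) a b = dM n m (k' : ℤ) a' b') : k = k' ∧ a = a' ∧ b = b' := by
  have hμ0 := dMu_ne m
  have hν0 := dNu_ne n
  have hent : ∀ i j : Fin 3, dM n m (k:ℤ) a b i j = dM n m (k':ℤ) a' b' i j :=
    fun i j => by rw [h]
  have toFin : ∀ c : ZMod 3, ∃ i : Fin 3, ((i : ℕ) : ZMod 3) = c := fun c =>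
    ⟨⟨c.val, c.val_lt⟩, ZMod.natCast_rightInverse c⟩
  have hKK : (((k:ℤ)) : ZMod 3) = (((k':ℤ)) : ZMod 3) := by
    by_contra hne
    obtain ⟨j0, hj0⟩ := toFin (((k:ℤ)) : ZMod 3)
    have h0 := hent 0 j0
    simp only [dM, hj0, Fin.val_zero, Nat.cast_zero, zero_add, eq_self_iff_true, if_true] at h0
    rw [if_neg hne] at h0
    exact absurd h0 (mul_ne_zero (zpow_ne_zero _ hμ0) (zpow_ne_zero _ hν0))
  have hkey : ∀ c : ZMod 3,
      dMu m ^ (k:ℤ) * dNu n ^ dE (a:ℤ) b c = dMu m ^ (k':ℤ) * dNu n ^ dE (a':ℤ) b' c := by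
    intro c
    obtain ⟨i0, hi0⟩ := toFin (c - (((k:ℤ)) : ZMod 3))
    obtain ⟨j0, hj0⟩ := toFin c
    have h0 := hent i0 j0
    simp only [dM, hi0, hj0] at h0
    rw [if_pos (by ring), if_pos (by rw [← hKK]; ring)] at h0
    exact h0
  set ζ := dMu m ^ ((k:ℤ) - k') with hζ
  have hζ0 : ζ ≠ 0 := zpow_ne_zero _ hμ0
  have e0 : ζ = dNu n ^ ((a':ℤ) - a) := by
    have e := hkey 0
    simp (config := { decide := true }) only [dE, if_true, if_false] at e
    rw [hζ, zpow_sub₀ hμ0, zpow_sub₀ hν0,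
      div_eq_div_iff (zpow_ne_zero _ hμ0) (zpow_ne_zero _ hν0)]
    linear_combination e
  have e1 : ζ = dNu n ^ ((b':ℤ) - b) := by
    have e := hkey 1
    simp (config := { decide := true }) only [dE, if_true, if_false] at e
    rw [hζ, zpow_sub₀ hμ0, zpow_sub₀ hν0,
      div_eq_div_iff (zpow_ne_zero _ hμ0) (zpow_ne_zero _ hν0)]
    linear_combination e
  have h3d : ((3:ℕ):ℤ) ∣ (k:ℤ) - k' := by
    rw [← ZMod.intCast_zmod_eq_zero_iff_dvd, Int.cast_sub, sub_eq_zero]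
    exact hKK
  obtain ⟨d, hd⟩ := h3d
  have hζ3 : ζ ^ ((3 ^ (m-1) : ℕ) : ℤ) = 1 := by
    rw [hζ, ← dzpow_mul _ hμ0]
    apply dMu_zpow_one
    refine ⟨d, ?_⟩
    rw [hd]
    push_cast
    rw [show (3:ℤ)^m = 3 ^ (m-1) * 3 by rw [← pow_succ]; congr 1; omega]
    ring
  have hζn : ζ ^ ((n:ℕ) : ℤ) = 1 := by
    rw [e0, ← dzpow_mul _ hν0]
    exact dNu_zpow_one n hn (dvd_mul_left _ _)
  have hζ1 : ζ = 1 := by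
    have hcop : Nat.Coprime (3 ^ (m-1)) n :=
      Nat.Coprime.pow_left _ ((Nat.Prime.coprime_iff_not_dvd Nat.prime_three).mpr hn3)
    obtain ⟨u, v, huv⟩ := Nat.isCoprime_iff_coprime.mpr hcop
    calc ζ = ζ ^ (u * ((3^(m-1):ℕ):ℤ) + v * (n:ℤ)) := by rw [huv, zpow_one]
    _ = (ζ ^ ((3^(m-1):ℕ):ℤ)) ^ u * (ζ ^ ((n:ℕ):ℤ)) ^ v := by
        rw [zpow_add₀ hζ0, mul_comm u, mul_comm v, dzpow_mul _ hζ0, dzpow_mul _ hζ0]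
    _ = 1 := by rw [hζ3, hζn, _root_.one_zpow, _root_.one_zpow, one_mul]
  have hkk : k = k' := by
    have hdvd : ((3^m : ℕ):ℤ) ∣ (k:ℤ) - k' :=
      ((dMu_prim m).zpow_eq_one_iff_dvd _).mp (by rw [← hζ]; exact hζ1)
    have habs : |(k:ℤ) - k'| < ((3^m : ℕ):ℤ) := abs_lt.mpr (by omega)
    have := Int.eq_zero_of_abs_lt_dvd hdvd habs
    omega
  have haa : a = a' := by
    have h1 : dNu n ^ ((a':ℤ) - a) = 1 := by rw [← e0]; exact hζ1
    have hdvd := ((dNu_prim n hn).zpow_eq_one_iff_dvd _).mp h1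
    have habs : |(a':ℤ) - a| < (n:ℤ) := abs_lt.mpr (by omega)
    have := Int.eq_zero_of_abs_lt_dvd hdvd habs
    omega
  have hbb : b = b' := by
    have h1 : dNu n ^ ((b':ℤ) - b) = 1 := by rw [← e1]; exact hζ1
    have hdvd := ((dNu_prim n hn).zpow_eq_one_iff_dvd _).mp h1
    have habs : |(b':ℤ) - b| < (n:ℤ) := abs_lt.mpr (by omega)
    have := Int.eq_zero_of_abs_lt_dvd hdvd habs
    omega
  exact ⟨hkk, haa, hbb⟩

@[simp] lemma dE00 (x : ZMod 3) : dE 0 0 x = 0 := by simp [dE]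

lemma dS_mem {n m : ℕ} {x : GL (Fin 3) ℂ} :
    x ∈ dS n m ↔ ∃ k a b : ℤ, (x : Matrix (Fin 3) (Fin 3) ℂ) = dM n m k a b := Iff.rfl

set_option maxHeartbeats 1000000 in
/-- The group `Δ(3n², m)`, generated by `L_n` and `E_m` inside `GL(3,ℂ)`,
has order `3^m·n²`. -/
theorem delta_3n2m_order (n : ℕ) (hn : 0 < n) (hn3 : ¬ 3 ∣ n)
    (m : ℕ) (hm : 0 < m)
    (L Em : GL (Fin 3) ℂ)
    (hL : L.val = Lmatrix n) (hEm : Em.val = EMmatrix m) :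
    Nat.card ↥(Subgroup.closure ({L, Em} : Set (GL (Fin 3) ℂ))) = 3 ^ m * n ^ 2 := by
  haveI : NeZero n := ⟨hn.ne'⟩
  haveI : NeZero (3 ^ m) := ⟨(pow_pos (by norm_num) m).ne'⟩
  have hnz : n ≠ 0 := hn.ne'
  have hLM : (L : Matrix (Fin 3) (Fin 3) ℂ) = dM n m 0 0 1 := by rw [hL, dL_eq n m]
  have hEM : (Em : Matrix (Fin 3) (Fin 3) ℂ) = dM n m 1 0 0 := by rw [hEm, dEm_eq n m]
  set G := Subgroup.closure ({L, Em} : Set (GL (Fin 3) ℂ)) with hG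
  have hLmem : L ∈ G := Subgroup.subset_closure (Set.mem_insert _ _)
  have hEmem : Em ∈ G := Subgroup.subset_closure (Set.mem_insert_iff.mpr (Or.inr rfl))
  set C : GL (Fin 3) ℂ := Em * L * Em⁻¹ with hC
  have hCmem : C ∈ G := mul_mem (mul_mem hEmem hLmem) (inv_mem hEmem)
  have hEinv : ((Em⁻¹ : GL (Fin 3) ℂ) : Matrix (Fin 3) (Fin 3) ℂ) = dM n m (-1) 0 0 := by
    rw [Matrix.coe_units_inv, hEM]
    apply Matrix.inv_eq_right_inv
    rw [dM_mul, ← dM_one n m]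
    exact dM_args n m (by ring) (by simp) (by simp)
  have hEpow : ∀ j : ℕ, ((Em ^ j : GL (Fin 3) ℂ) : Matrix (Fin 3) (Fin 3) ℂ) = dM n m j 0 0 := by
    intro j
    induction j with
    | zero => simp only [pow_zero, Units.val_one, Nat.cast_zero]; exact (dM_one n m).symm
    | succ j ih =>
      rw [pow_succ, Units.val_mul, ih, hEM, dM_mul]
      exact dM_args n m (by push_cast; ring) (by simp) (by simp)
  have hLpow : ∀ t : ℕ, ((L ^ t : GL (Fin 3) ℂ) : Matrix (Fin 3) (Fin 3) ℂ) = dM n m 0 0 t := by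
    intro t
    induction t with
    | zero => simp only [pow_zero, Units.val_one, Nat.cast_zero]; exact (dM_one n m).symm
    | succ t ih =>
      rw [pow_succ, Units.val_mul, ih, hLM, dM_mul]
      refine dM_args n m (by ring) ?_ ?_
      · simp (config := { decide := true }) [dE]
      · simp (config := { decide := true }) [dE] <;> (push_cast; ring)
  have hCval : (C : Matrix (Fin 3) (Fin 3) ℂ) = dM n m 0 1 (-1) := by
    rw [hC, Units.val_mul, Units.val_mul, hEM, hLM, hEinv, dM_mul, dM_mul]
    refine dM_args n m (by ring) ?_ ?_
    · simp (config := { decide := true }) [dE]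
    · simp (config := { decide := true }) [dE]
  have hCpow : ∀ s : ℕ, ((C ^ s : GL (Fin 3) ℂ) : Matrix (Fin 3) (Fin 3) ℂ)
      = dM n m 0 s (-(s:ℤ)) := by
    intro s
    induction s with
    | zero => simp only [pow_zero, Units.val_one, Nat.cast_zero, neg_zero]; exact (dM_one n m).symm
    | succ s ih =>
      rw [pow_succ, Units.val_mul, ih, hCval, dM_mul]
      refine dM_args n m (by ring) ?_ ?_
      · simp (config := { decide := true }) [dE] <;> (push_cast; ring)
      · simp (config := { decide := true }) [dE] <;> (push_cast; ring)
  have hwval : ∀ k a b : ℕ, ((Em ^ k * L ^ (a + b) * C ^ a : GL (Fin 3) ℂ) :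
      Matrix (Fin 3) (Fin 3) ℂ) = dM n m k a b := by
    intro k a b
    rw [Units.val_mul, Units.val_mul, hEpow, hLpow, hCpow, dM_mul, dM_mul]
    refine dM_args n m (by ring) ?_ ?_
    · simp (config := { decide := true }) [dE]
    · simp (config := { decide := true }) [dE] <;> (push_cast; ring)
  have hrep : ∀ x : GL (Fin 3) ℂ, (∃ k a b : ℤ, (x : Matrix (Fin 3) (Fin 3) ℂ) = dM n m k a b) →
      ∃ k0 a0 b0 : ℕ, k0 < 3 ^ m ∧ a0 < n ∧ b0 < n ∧ x = Em ^ k0 * L ^ (a0 + b0) * C ^ a0 := by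
    rintro x ⟨k, a, b, hx⟩
    have hq : (0:ℤ) < ((3 ^ m : ℕ) : ℤ) := by positivity
    have hnq : (0:ℤ) < ((n : ℕ) : ℤ) := by positivity
    have h1 := Int.emod_lt_of_pos k hq
    have h2 := Int.emod_nonneg k hq.ne'
    have h3 := Int.emod_lt_of_pos a hnq
    have h4 := Int.emod_nonneg a hnq.ne'
    have h5 := Int.emod_lt_of_pos b hnq
    have h6 := Int.emod_nonneg b hnq.ne'
    refine ⟨(k % ((3^m : ℕ) : ℤ)).toNat, (a % (n : ℤ)).toNat, (b % (n : ℤ)).toNat,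
      by omega, by omega, by omega, ?_⟩
    have hcong : dM n m k a b = dM n m ((k % ((3^m : ℕ) : ℤ)).toNat : ℤ)
        ((a % (n : ℤ)).toNat : ℤ) ((b % (n : ℤ)).toNat : ℤ) := by
      refine dM_congr n m hnz hm ?_ ?_ ?_
      · refine ⟨k / ((3^m : ℕ) : ℤ), ?_⟩
        rw [Int.toNat_of_nonneg h2, Int.emod_def]
        ring
      · refine ⟨a / (n : ℤ), ?_⟩
        rw [Int.toNat_of_nonneg h4, Int.emod_def]
        ring
      · refine ⟨b / (n : ℤ), ?_⟩
        rw [Int.toNat_of_nonneg h6, Int.emod_def]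
        ring
    exact Units.ext (by rw [hx, hcong, hwval])
  have hSG : G = dS n m := by
    apply le_antisymm
    · rw [hG]
      refine (Subgroup.closure_le _).mpr ?_
      rintro x hx
      rcases hx with rfl | hx
      · exact ⟨0, 0, 1, hLM⟩
      · rw [Set.mem_singleton_iff] at hx
        subst hx
        exact ⟨1, 0, 0, hEM⟩
    · rintro x hx
      obtain ⟨k0, a0, b0, _, _, _, rfl⟩ := hrep x (dS_mem.mp hx)
      exact mul_mem (mul_mem (pow_mem hEmem _) (pow_mem hLmem _)) (pow_mem hCmem _)
  rw [hSG]
  have hbij : Function.Bijective (fun x : ZMod (3^m) × ZMod n × ZMod n =>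
      (⟨Em ^ (x.1.val) * L ^ (x.2.1.val + x.2.2.val) * C ^ (x.2.1.val),
        ⟨x.1.val, x.2.1.val, x.2.2.val, hwval _ _ _⟩⟩ : ↥(dS n m))) := by
    constructor
    · rintro ⟨k1, a1, b1⟩ ⟨k2, a2, b2⟩ hxy
      simp only [Subtype.mk.injEq] at hxy
      have hval : dM n m k1.val a1.val b1.val = dM n m k2.val a2.val b2.val := by
        rw [← hwval, ← hwval]
        exact congrArg (fun y : ↥(dS n m) => ((y : GL (Fin 3) ℂ) : Matrix (Fin 3) (Fin 3) ℂ)) hxy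
      obtain ⟨e1, e2, e3⟩ := dM_inj n m hnz hn3 hm (ZMod.val_lt k1) (ZMod.val_lt k2)
        (ZMod.val_lt a1) (ZMod.val_lt a2) (ZMod.val_lt b1) (ZMod.val_lt b2) hval
      exact Prod.ext (ZMod.val_injective _ e1)
        (Prod.ext (ZMod.val_injective _ e2) (ZMod.val_injective _ e3))
    · rintro ⟨x, hx⟩
      obtain ⟨k0, a0, b0, hk0, ha0, hb0, rfl⟩ := hrep x (dS_mem.mp hx)
      refine ⟨((k0 : ZMod (3^m)), (a0 : ZMod n), (b0 : ZMod n)), ?_⟩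
      apply Subtype.ext
      simp only [ZMod.val_cast_of_lt hk0, ZMod.val_cast_of_lt ha0, ZMod.val_cast_of_lt hb0]
  calc Nat.card ↥(dS n m) = Nat.card (ZMod (3^m) × ZMod n × ZMod n) :=
        (Nat.card_eq_of_bijective _ hbij).symm
  _ = 3 ^ m * n ^ 2 := by
      rw [Nat.card_prod, Nat.card_prod, Nat.card_zmod, Nat.card_zmod]
      ring
end
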